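/- arXiv:2007.02354 — 4 statements merged into one kernel-verified Lean document; each statement's English description precedes it below -/
import Mathlib

section
/- For every continuous V : 𝕋^d → ℝ and every u ∈ L², the curve t ↦ Φ_t(u), viewed as a map from ℝ into the Hilbert space L², is differentiable at every t₀ ∈ ℝ with derivative −i·F(Φ_{t₀}(u)) = −i·(V⋆|u|²)·Φ_{t₀}(u); that is, (Φ_t(u))_{t∈ℝ} solves the differential equation i du/dt = F(u) in L². -/
open MeasureTheory Complex Real

noncomputable section

instance fact2pi : Fact (0 < 2 * Real.pi) := ⟨by positivity⟩

abbrev Torus (d : ℕ) := Fin d → AddCircle (2 * Real.pi)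

abbrev L2T (d : ℕ) := Lp ℂ 2 (volume : Measure (Torus d))

/-- The convolution `V ⋆ |u|²`. -/
def Vconv {d : ℕ} (V : C(Torus d, ℝ)) (u : L2T d) : Torus d → ℝ :=
  fun x => ∫ y, V (x - y) * ‖(u : Torus d → ℂ) y‖ ^ 2

/-- The nonlinearity `F(u) = (V ⋆ |u|²) · u` as a function. -/
def FFun {d : ℕ} (V : C(Torus d, ℝ)) (u : L2T d) : Torus d → ℂ :=
  fun x => (Vconv V u x : ℂ) * (u : Torus d → ℂ) x

/-- The flow `Φ_t(u) = exp(-i t (V ⋆ |u|²)) · u` as a function. -/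
def PhiFun {d : ℕ} (V : C(Torus d, ℝ)) (t : ℝ) (u : L2T d) : Torus d → ℂ :=
  fun x => Complex.exp (-(Complex.I * t * (Vconv V u x))) * (u : Torus d → ℂ) x

open Classical in
/-- `F(u)` as an element of `L²`. -/
def FL {d : ℕ} (V : C(Torus d, ℝ)) (u : L2T d) : L2T d :=
  if h : MemLp (FFun V u) 2 volume then h.toLp _ else 0

open Classical in
/-- `Φ_t(u)` as an element of `L²`. -/
def PhiL {d : ℕ} (V : C(Torus d, ℝ)) (t : ℝ) (u : L2T d) : L2T d :=
  if h : MemLp (PhiFun V t u) 2 volume then h.toLp _ else 0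

namespace Stmt6Aux
variable {d : ℕ} (V : C(Torus d, ℝ)) (u : L2T d)

variable {d : ℕ} (V : C(Torus d, ℝ)) (u : L2T d)

lemma integrable_normSq : Integrable (fun y => ‖(u : Torus d → ℂ) y‖ ^ 2) volume := by
  have h := (Lp.memLp u).integrable_norm_rpow (by norm_num) (by norm_num)
  simpa [Real.rpow_natCast] using h

lemma vconv_continuous : Continuous (Vconv V u) := by
  have hcs : HasCompactSupport (V : Torus d → ℝ) := HasCompactSupport.of_compactSpace _
  have h := hcs.continuous_convolution_right (ContinuousLinearMap.mul ℝ ℝ)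
    (integrable_normSq u).locallyIntegrable V.continuous
  convert h using 1
  funext x
  rw [MeasureTheory.convolution_def]
  simp only [Vconv, ContinuousLinearMap.mul_apply']
  exact integral_congr_ae (.of_forall fun y => mul_comm _ _)

/-- bound for the convolution -/
def MB : ℝ := ‖BoundedContinuousFunction.mkOfCompact V‖ * ∫ y, ‖(u : Torus d → ℂ) y‖ ^ 2

lemma MB_nonneg : 0 ≤ MB V u :=
  mul_nonneg (norm_nonneg _) (integral_nonneg fun y => by positivity)

lemma vconv_abs_le (x : Torus d) : |Vconv V u x| ≤ MB V u := by
  have h1 : |Vconv V u x| ≤ ∫ y, |V (x - y) * ‖(u : Torus d → ℂ) y‖ ^ 2| := by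
    simpa only [Real.norm_eq_abs, Vconv] using norm_integral_le_integral_norm (fun y => V (x - y) * ‖(u : Torus d → ℂ) y‖ ^ 2)
  refine h1.trans ?_
  rw [MB, ← integral_const_mul]
  refine integral_mono_of_nonneg (.of_forall fun y => abs_nonneg _)
    ((integrable_normSq u).const_mul _) (.of_forall fun y => ?_)
  dsimp only
  rw [abs_mul, _root_.abs_of_nonneg (by positivity : (0:ℝ) ≤ ‖(u : Torus d → ℂ) y‖ ^ 2)]
  refine mul_le_mul_of_nonneg_right ?_ (by positivity)
  exact BoundedContinuousFunction.norm_coe_le_norm (BoundedContinuousFunction.mkOfCompact V) (x - y)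

lemma norm_phiFun (t : ℝ) (x : Torus d) : ‖PhiFun V t u x‖ = ‖(u : Torus d → ℂ) x‖ := by
  rw [PhiFun, norm_mul, Complex.norm_exp]
  simp

lemma memPhi (t : ℝ) : MemLp (PhiFun V t u) 2 volume := by
  have hc : Continuous fun x => Complex.exp (-(Complex.I * t * (Vconv V u x : ℂ))) := by
    exact Complex.continuous_exp.comp
      ((continuous_const.mul ((Complex.continuous_ofReal.comp (vconv_continuous V u)))).neg)
  refine MemLp.of_le (Lp.memLp u) (hc.aestronglyMeasurable.mul (Lp.aestronglyMeasurable u))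
    (.of_forall fun x => le_of_eq (norm_phiFun V u t x))

lemma phiL_coe (t : ℝ) : (PhiL V t u : Torus d → ℂ) =ᵐ[volume] PhiFun V t u := by
  rw [PhiL, dif_pos (memPhi V u t)]
  exact MemLp.coeFn_toLp _

lemma vconv_phiL (t : ℝ) : Vconv V (PhiL V t u) = Vconv V u := by
  funext x
  refine integral_congr_ae ?_
  filter_upwards [phiL_coe V u t] with y hy
  rw [hy, norm_phiFun]

lemma ffun_phiL_eq (t : ℝ) :
    FFun V (PhiL V t u) =ᵐ[volume] fun x => (Vconv V u x : ℂ) * PhiFun V t u x := by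
  filter_upwards [phiL_coe V u t] with x hx
  rw [FFun, vconv_phiL, hx]

lemma memF (t : ℝ) : MemLp (FFun V (PhiL V t u)) 2 volume := by
  have hb : ∀ᵐ x ∂(volume : Measure (Torus d)),
      ‖FFun V (PhiL V t u) x‖ ≤ MB V u * ‖(u : Torus d → ℂ) x‖ := by
    filter_upwards [ffun_phiL_eq V u t] with x hx
    rw [hx, norm_mul, norm_phiFun, Complex.norm_real]
    exact mul_le_mul_of_nonneg_right (vconv_abs_le V u x) (norm_nonneg _)
  have hm : AEStronglyMeasurable (FFun V (PhiL V t u)) volume := by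
    refine AEStronglyMeasurable.congr ?_ (ffun_phiL_eq V u t).symm
    exact ((Complex.continuous_ofReal.comp (vconv_continuous V u)).aestronglyMeasurable.mul
      (memPhi V u t).aestronglyMeasurable)
  exact MemLp.of_le_mul (Lp.memLp u) hm hb

lemma fl_coe (t : ℝ) :
    (FL V (PhiL V t u) : Torus d → ℂ) =ᵐ[volume]
      fun x => (Vconv V u x : ℂ) * PhiFun V t u x := by
  rw [FL, dif_pos (memF V u t)]
  exact (MemLp.coeFn_toLp _).trans (ffun_phiL_eq V u t)

lemma exp_est {θ : ℝ} (hθ : |θ| ≤ 1) :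
    ‖Complex.exp (Complex.I * θ) - 1 - Complex.I * θ‖ ≤ θ ^ 2 := by
  have habs : ‖Complex.I * θ‖ = |θ| := by
    rw [norm_mul, Complex.norm_I, one_mul, Complex.norm_real, Real.norm_eq_abs]
  have h := Complex.norm_exp_sub_one_sub_id_le (x := Complex.I * (θ : ℂ)) (by rw [habs]; exact hθ)
  rw [habs] at h
  rw [← _root_.sq_abs θ]
  exact h

end Stmt6Aux

open Stmt6Aux Filter Asymptotics Set

/-- The curve `t ↦ Φ_t(u)`, as a map from `ℝ` to `L²`, is differentiable at every `t₀` with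
derivative `−i F(Φ_{t₀}(u))`; i.e. it solves `i du/dt = F(u)` in `L²`. -/
theorem stmt6 (d : ℕ) (hd : 1 ≤ d) (V : C(Torus d, ℝ)) (u : L2T d) (t₀ : ℝ) :
    HasDerivAt (fun t : ℝ => PhiL V t u) ((-Complex.I) • FL V (PhiL V t₀ u)) t₀ := by
  rw [hasDerivAt_iff_isLittleO, isLittleO_iff]
  intro c hc
  set M := MB V u with hM
  have hM0 : 0 ≤ M := MB_nonneg V u
  set δ : ℝ := min (1 / (M + 1)) (c / (M ^ 2 * ‖u‖ + 1)) with hδ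
  have hδ0 : 0 < δ := by
    apply lt_min <;> positivity
  have hev : ∀ᶠ t in nhds t₀, |t - t₀| ≤ δ := by
    filter_upwards [Metric.closedBall_mem_nhds t₀ hδ0] with t ht
    simpa [Real.dist_eq] using ht
  filter_upwards [hev] with t ht
  -- the pointwise description of the difference
  set X := PhiL V t u - PhiL V t₀ u - (t - t₀) • ((-Complex.I) • FL V (PhiL V t₀ u)) with hX
  set Et : Torus d → ℂ := fun x =>
    (Complex.exp (Complex.I * ((-((t - t₀) * Vconv V u x) : ℝ) : ℂ)) - 1
      - Complex.I * ((-((t - t₀) * Vconv V u x) : ℝ) : ℂ)) * PhiFun V t₀ u x with hEt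
  have hXae : (X : Torus d → ℂ) =ᵐ[volume] Et := by
    filter_upwards [Lp.coeFn_sub (PhiL V t u - PhiL V t₀ u)
        ((t - t₀) • ((-Complex.I) • FL V (PhiL V t₀ u))),
      Lp.coeFn_sub (PhiL V t u) (PhiL V t₀ u),
      Lp.coeFn_smul (t - t₀) ((-Complex.I) • FL V (PhiL V t₀ u)),
      Lp.coeFn_smul (-Complex.I) (FL V (PhiL V t₀ u)),
      phiL_coe V u t, phiL_coe V u t₀, fl_coe V u t₀] with x h1 h2 h3 h4 h5 h6 h7
    rw [hX]
    rw [h1, Pi.sub_apply, h2, Pi.sub_apply, h3, Pi.smul_apply, h4, Pi.smul_apply, h5, h6, h7]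
    rw [hEt]
    have hexp : Complex.exp (-(Complex.I * t * (Vconv V u x : ℂ)))
        = Complex.exp (Complex.I * ((-((t - t₀) * Vconv V u x) : ℝ) : ℂ))
          * Complex.exp (-(Complex.I * t₀ * (Vconv V u x : ℂ))) := by
      rw [← Complex.exp_add]
      congr 1
      push_cast
      ring
    simp only [PhiFun, hexp, smul_eq_mul, Complex.real_smul]
    push_cast
    ring
  -- the norm bound
  have hnorm : ∀ x, ‖Et x‖ ≤ ((t - t₀) ^ 2 * M ^ 2) * ‖(u : Torus d → ℂ) x‖ := by
    intro x
    rw [hEt]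
    rw [norm_mul, norm_phiFun]
    refine mul_le_mul_of_nonneg_right ?_ (norm_nonneg _)
    set θ : ℝ := -((t - t₀) * Vconv V u x) with hθdef
    have hgb := vconv_abs_le V u x
    have hθ1 : |θ| ≤ 1 := by
      rw [hθdef, abs_neg, abs_mul]
      calc |t - t₀| * |Vconv V u x| ≤ δ * M := by
            exact mul_le_mul ht hgb (abs_nonneg _) hδ0.le
          _ ≤ (1 / (M + 1)) * M := by
            exact mul_le_mul_of_nonneg_right (min_le_left _ _) hM0
          _ ≤ 1 := by
            rw [div_mul_eq_mul_div, one_mul, div_le_one (by positivity)]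
            linarith
    refine le_trans (le_of_eq ?_) ((exp_est hθ1).trans ?_)
    · rw [hθdef]
    rw [hθdef]
    calc (-((t - t₀) * Vconv V u x)) ^ 2 = (t - t₀) ^ 2 * (Vconv V u x) ^ 2 := by ring
      _ ≤ (t - t₀) ^ 2 * M ^ 2 := by
          refine mul_le_mul_of_nonneg_left ?_ (by positivity)
          rw [← _root_.sq_abs (Vconv V u x)]
          exact pow_le_pow_left₀ (abs_nonneg _) hgb 2
  -- conclude
  have hC0 : (0:ℝ) ≤ (t - t₀) ^ 2 * M ^ 2 := by positivity
  have hXnorm : ‖X‖ ≤ ((t - t₀) ^ 2 * M ^ 2) * ‖u‖ := by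
    rw [Lp.norm_def, eLpNorm_congr_ae hXae]
    have hle : eLpNorm Et 2 volume
        ≤ eLpNorm ((((t - t₀) ^ 2 * M ^ 2 : ℝ)) • ((u : Torus d → ℂ))) 2 volume := by
      refine eLpNorm_mono_ae (.of_forall fun x => ?_)
      rw [Pi.smul_apply, norm_smul, Real.norm_eq_abs, _root_.abs_of_nonneg hC0]
      exact hnorm x
    rw [eLpNorm_const_smul] at hle
    have hfin : (‖((t - t₀) ^ 2 * M ^ 2 : ℝ)‖₊ : ENNReal) * eLpNorm (u : Torus d → ℂ) 2 volume ≠ ⊤ :=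
      ENNReal.mul_ne_top ENNReal.coe_ne_top (Lp.eLpNorm_ne_top u)
    refine (ENNReal.toReal_mono hfin hle).trans ?_
    rw [ENNReal.toReal_mul, ENNReal.coe_toReal, coe_nnnorm, Real.norm_eq_abs,
      _root_.abs_of_nonneg hC0, Lp.norm_def]
  refine hXnorm.trans ?_
  have h2 : |t - t₀| ≤ c / (M ^ 2 * ‖u‖ + 1) := ht.trans (min_le_right _ _)
  have hun : (0:ℝ) ≤ ‖u‖ := norm_nonneg _
  rw [Real.norm_eq_abs]
  have : (t - t₀) ^ 2 * M ^ 2 * ‖u‖ = |t - t₀| * (|t - t₀| * (M ^ 2 * ‖u‖)) := by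
    rw [← _root_.sq_abs (t - t₀)]; ring
  rw [this, mul_comm c |t - t₀|]
  have hK : (0:ℝ) ≤ M ^ 2 * ‖u‖ := by positivity
  have h3 : c / (M ^ 2 * ‖u‖ + 1) * (M ^ 2 * ‖u‖) ≤ c := by
    rw [div_mul_eq_mul_div, div_le_iff₀ (by positivity)]
    nlinarith
  exact mul_le_mul_of_nonneg_left ((mul_le_mul_of_nonneg_right h2 hK).trans h3) (abs_nonneg _)
end
end

section
/- For every continuous V : 𝕋^d → ℝ, every u ∈ L² and every t ∈ ℝ, one has ‖F(Φ_t(u)) − F(u)‖_{L²} ≤ 3 |t| ‖V‖²_∞ ‖u‖⁵_{L²}, where F(u) = (V⋆|u|²)·u and Φ_t(u) = exp(−i t (V⋆|u|²))·u. -/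
open MeasureTheory Complex Real

noncomputable section

namespace Stmt8Aux

variable {d : ℕ}

lemma integrable_normsq (u : L2T d) :
    Integrable (fun y => ‖(u : Torus d → ℂ) y‖ ^ 2) volume :=
  (Lp.memLp u).norm.integrable_sq

lemma integral_normsq (u : L2T d) :
    ∫ y, ‖(u : Torus d → ℂ) y‖ ^ 2 = ‖u‖ ^ 2 := by
  have h1 : (inner ℂ u u : ℂ) = ∫ a, (inner ℂ ((u : Torus d → ℂ) a) ((u : Torus d → ℂ) a) : ℂ) :=
    L2.inner_def u u
  have h2 : ((inner ℂ u u : ℂ)).re = ‖u‖ ^ 2 := by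
    rw [← inner_self_eq_norm_sq (𝕜 := ℂ) u]
    rfl
  have hint : Integrable (fun a => (inner ℂ ((u : Torus d → ℂ) a) ((u : Torus d → ℂ) a) : ℂ))
      volume := L2.integrable_inner (𝕜 := ℂ) u u
  have h3 : ((inner ℂ u u : ℂ)).re
      = ∫ a, ((inner ℂ ((u : Torus d → ℂ) a) ((u : Torus d → ℂ) a) : ℂ)).re := by
    rw [h1]
    exact (integral_re hint).symm
  have h4 : ∀ a : Torus d,
      ((inner ℂ ((u : Torus d → ℂ) a) ((u : Torus d → ℂ) a) : ℂ)).re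
        = ‖(u : Torus d → ℂ) a‖ ^ 2 := fun a => by
    rw [← inner_self_eq_norm_sq (𝕜 := ℂ)]; simp [RCLike.re_to_complex]
  rw [← h2, h3]
  exact integral_congr_ae (Filter.Eventually.of_forall fun a => (h4 a).symm)

lemma integrable_conv (V : C(Torus d, ℝ)) (u : L2T d) (x : Torus d) :
    Integrable (fun y => V (x - y) * ‖(u : Torus d → ℂ) y‖ ^ 2) volume := by
  refine (integrable_normsq u).bdd_mul (c := ‖V‖) ?_ (Filter.Eventually.of_forall fun y => V.norm_coe_le_norm _)
  exact (V.continuous.comp (continuous_const.sub continuous_id)).aestronglyMeasurable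

lemma vconv_abs_le (V : C(Torus d, ℝ)) (u : L2T d) (x : Torus d) :
    |Vconv V u x| ≤ ‖V‖ * ‖u‖ ^ 2 := by
  have h1 : |Vconv V u x| ≤ ∫ y, |V (x - y) * ‖(u : Torus d → ℂ) y‖ ^ 2| := by
    simpa only [Real.norm_eq_abs, Vconv] using
      norm_integral_le_integral_norm (μ := volume) (fun y => V (x - y) * ‖(u : Torus d → ℂ) y‖ ^ 2)
  have h2 : ∫ y, |V (x - y) * ‖(u : Torus d → ℂ) y‖ ^ 2|
      ≤ ∫ y, ‖V‖ * ‖(u : Torus d → ℂ) y‖ ^ 2 := by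
    refine integral_mono (integrable_conv V u x).abs ((integrable_normsq u).const_mul _) ?_
    intro y
    dsimp only
    rw [abs_mul, _root_.abs_of_nonneg (by positivity : (0:ℝ) ≤ ‖(u : Torus d → ℂ) y‖ ^ 2)]
    exact mul_le_mul_of_nonneg_right (by simpa [Real.norm_eq_abs] using V.norm_coe_le_norm (x - y))
      (by positivity)
  calc |Vconv V u x| ≤ _ := h1
    _ ≤ _ := h2
    _ = ‖V‖ * ‖u‖ ^ 2 := by rw [integral_const_mul, integral_normsq]

lemma normsq_aesm (u : L2T d) :
    AEStronglyMeasurable (fun y => ‖(u : Torus d → ℂ) y‖ ^ 2) volume := by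
  exact (Lp.aestronglyMeasurable u).norm.pow 2

lemma vconv_aesm (V : C(Torus d, ℝ)) (u : L2T d) :
    AEStronglyMeasurable (Vconv V u) volume := by
  have h : AEStronglyMeasurable
      (fun p : Torus d × Torus d => V (p.1 - p.2) * ‖(u : Torus d → ℂ) p.2‖ ^ 2)
      ((volume : Measure (Torus d)).prod volume) := by
    refine AEStronglyMeasurable.mul ?_ ((normsq_aesm u).comp_snd)
    exact (V.continuous.comp (continuous_fst.sub continuous_snd)).aestronglyMeasurable
  exact h.integral_prod_right'

lemma memF (V : C(Torus d, ℝ)) (u : L2T d) : MemLp (FFun V u) 2 volume := by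
  refine MemLp.of_le_mul (c := ‖V‖ * ‖u‖ ^ 2) (Lp.memLp u) ?_ ?_
  · exact (Complex.continuous_ofReal.comp_aestronglyMeasurable (vconv_aesm V u)).mul
      (Lp.aestronglyMeasurable u)
  · refine Filter.Eventually.of_forall fun x => ?_
    have : ‖FFun V u x‖ = |Vconv V u x| * ‖(u : Torus d → ℂ) x‖ := by
      simp [FFun, Complex.norm_real]
    rw [this]
    exact mul_le_mul_of_nonneg_right (vconv_abs_le V u x) (norm_nonneg _)

lemma norm_phiFun (V : C(Torus d, ℝ)) (t : ℝ) (u : L2T d) (x : Torus d) :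
    ‖PhiFun V t u x‖ = ‖(u : Torus d → ℂ) x‖ := by
  have : ‖Complex.exp (-(Complex.I * t * (Vconv V u x : ℂ)))‖ = 1 := by
    rw [Complex.norm_exp]
    simp
  rw [PhiFun, norm_mul, this, one_mul]

lemma memPhi (V : C(Torus d, ℝ)) (t : ℝ) (u : L2T d) : MemLp (PhiFun V t u) 2 volume := by
  refine MemLp.of_le (Lp.memLp u) ?_
    (Filter.Eventually.of_forall fun x => le_of_eq (norm_phiFun V t u x))
  refine AEStronglyMeasurable.mul ?_ (Lp.aestronglyMeasurable u)
  refine Complex.continuous_exp.comp_aestronglyMeasurable ?_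
  have := Complex.continuous_ofReal.comp_aestronglyMeasurable (vconv_aesm V u)
  exact (this.const_mul (Complex.I * t)).neg

lemma exp_sub_one_le (z : ℂ) (hz : z.re = 0) : ‖Complex.exp z - 1‖ ≤ 2 * ‖z‖ := by
  by_cases h : ‖z‖ ≤ 1
  · simpa using Complex.norm_exp_sub_one_le (x := z) (by simpa using h)
  · have h1 : ‖Complex.exp z‖ = 1 := by rw [Complex.norm_exp, hz, Real.exp_zero]
    calc ‖Complex.exp z - 1‖ ≤ ‖Complex.exp z‖ + ‖(1 : ℂ)‖ := norm_sub_le _ _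
      _ = 2 := by rw [h1]; norm_num
      _ ≤ 2 * ‖z‖ := by nlinarith [not_le.mp h]

end Stmt8Aux

open Stmt8Aux in
/-- `‖F(Φ_t(u)) − F(u)‖_{L²} ≤ 3 |t| ‖V‖²_∞ ‖u‖⁵_{L²}` for the nonlocal interaction
nonlinearity `F(u) = (V⋆|u|²)·u` and its flow `Φ_t(u) = exp(−i t (V⋆|u|²))·u`. -/
theorem stmt8 (d : ℕ) (hd : 1 ≤ d) (V : C(Torus d, ℝ)) (u : L2T d) (t : ℝ) :
    ‖FL V (PhiL V t u) - FL V u‖ ≤ 3 * |t| * ‖V‖ ^ 2 * ‖u‖ ^ 5 := by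
  classical
  set W : Torus d → ℝ := Vconv V u with hW
  -- Φ as Lp element coincides a.e. with PhiFun
  have hPhiEq : PhiL V t u = (memPhi V t u).toLp _ := by rw [PhiL, dif_pos (memPhi V t u)]
  have hPhi : (PhiL V t u : Torus d → ℂ) =ᵐ[volume] PhiFun V t u := by
    rw [hPhiEq]; exact (memPhi V t u).coeFn_toLp
  -- Vconv of PhiL equals Vconv of u
  have hVconvPhi : Vconv V (PhiL V t u) = W := by
    funext x
    refine integral_congr_ae ?_
    filter_upwards [hPhi] with y hy
    rw [hy, norm_phiFun V t u y]
  -- coeFn of the two FL's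
  have hFu : (FL V u : Torus d → ℂ) =ᵐ[volume] FFun V u := by
    rw [FL, dif_pos (memF V u)]; exact (memF V u).coeFn_toLp
  have hFPhi : (FL V (PhiL V t u) : Torus d → ℂ) =ᵐ[volume] FFun V (PhiL V t u) := by
    rw [FL, dif_pos (memF V (PhiL V t u))]; exact (memF V (PhiL V t u)).coeFn_toLp
  -- the difference function
  set g : Torus d → ℂ := fun x =>
    (W x : ℂ) * ((Complex.exp (-(Complex.I * t * (W x : ℂ))) - 1) * (u : Torus d → ℂ) x)
    with hg
  have hD : ((FL V (PhiL V t u) - FL V u : L2T d) : Torus d → ℂ) =ᵐ[volume] g := by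
    filter_upwards [Lp.coeFn_sub (FL V (PhiL V t u)) (FL V u), hFu, hFPhi, hPhi]
      with x h1 h2 h3 h4
    rw [h1, Pi.sub_apply, h2, h3]
    simp only [FFun, hVconvPhi, h4, PhiFun, hg, hW]
    ring
  -- pointwise bound
  set C : ℝ := 2 * |t| * ‖V‖ ^ 2 * ‖u‖ ^ 4 with hC
  have hCnn : 0 ≤ C := by positivity
  have hbound : ∀ x, ‖g x‖ ≤ ‖((C : ℂ) • (u : Torus d → ℂ)) x‖ := by
    intro x
    have hWle : |W x| ≤ ‖V‖ * ‖u‖ ^ 2 := vconv_abs_le V u x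
    have hexp : ‖Complex.exp (-(Complex.I * t * (W x : ℂ))) - 1‖
        ≤ 2 * (|t| * |W x|) := by
      have hre : (-(Complex.I * t * (W x : ℂ))).re = 0 := by simp
      have := exp_sub_one_le (-(Complex.I * t * (W x : ℂ))) hre
      have hn : ‖-(Complex.I * t * (W x : ℂ))‖ = |t| * |W x| := by
        simp [Complex.norm_real, abs_mul]
      rw [hn] at this
      exact this
    have h1 : ‖g x‖ = |W x| * (‖Complex.exp (-(Complex.I * t * (W x : ℂ))) - 1‖
        * ‖(u : Torus d → ℂ) x‖) := by
      simp [hg, Complex.norm_real, norm_mul]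
    rw [h1]
    have h2 : ‖((C : ℂ) • (u : Torus d → ℂ)) x‖ = C * ‖(u : Torus d → ℂ) x‖ := by
      rw [Pi.smul_apply, norm_smul, Complex.norm_real, Real.norm_eq_abs,
        _root_.abs_of_nonneg hCnn]
    rw [h2]
    have hWnn : (0:ℝ) ≤ |W x| := abs_nonneg _
    have hunn : (0:ℝ) ≤ ‖(u : Torus d → ℂ) x‖ := norm_nonneg _
    have hVnn : (0:ℝ) ≤ ‖V‖ := norm_nonneg _
    have hu2 : (0:ℝ) ≤ ‖u‖ := norm_nonneg _
    have htnn : (0:ℝ) ≤ |t| := abs_nonneg _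
    calc |W x| * (‖Complex.exp (-(Complex.I * t * (W x : ℂ))) - 1‖ * ‖(u : Torus d → ℂ) x‖)
        ≤ |W x| * ((2 * (|t| * |W x|)) * ‖(u : Torus d → ℂ) x‖) := by
          refine mul_le_mul_of_nonneg_left (mul_le_mul_of_nonneg_right hexp hunn) hWnn
      _ ≤ (‖V‖ * ‖u‖ ^ 2) * ((2 * (|t| * (‖V‖ * ‖u‖ ^ 2))) * ‖(u : Torus d → ℂ) x‖) := by
          have hA : (0:ℝ) ≤ ‖V‖ * ‖u‖ ^ 2 := by positivity
          have hWW : |W x| * |W x| ≤ (‖V‖ * ‖u‖ ^ 2) * (‖V‖ * ‖u‖ ^ 2) :=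
            mul_le_mul hWle hWle hWnn hA
          nlinarith [mul_le_mul_of_nonneg_left hWW
            (mul_nonneg (mul_nonneg (by norm_num : (0:ℝ) ≤ 2) htnn) hunn)]
      _ = C * ‖(u : Torus d → ℂ) x‖ := by rw [hC]; ring
  -- conclude via eLpNorm monotonicity
  have hnorm : ‖FL V (PhiL V t u) - FL V u‖ ≤ C * ‖u‖ := by
    rw [Lp.norm_def, eLpNorm_congr_ae hD]
    have hle : eLpNorm g 2 volume ≤ eLpNorm ((C : ℂ) • ((u : Torus d → ℂ))) 2 volume :=
      eLpNorm_mono hbound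
    have heq : eLpNorm ((C : ℂ) • ((u : Torus d → ℂ))) 2 volume
        = ‖(C : ℂ)‖₊ * eLpNorm ((u : Torus d → ℂ)) 2 volume := eLpNorm_const_smul _ _ _ _
    have hne : (‖(C : ℂ)‖₊ : ENNReal) * eLpNorm ((u : Torus d → ℂ)) 2 volume ≠ ⊤ :=
      ENNReal.mul_ne_top ENNReal.coe_ne_top (Lp.eLpNorm_ne_top u)
    calc (eLpNorm g 2 volume).toReal
        ≤ ((‖(C : ℂ)‖₊ : ENNReal) * eLpNorm ((u : Torus d → ℂ)) 2 volume).toReal := by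
          refine ENNReal.toReal_mono hne ?_
          rw [← heq]; exact hle
      _ = C * ‖u‖ := by
          rw [ENNReal.toReal_mul, Lp.norm_def]
          congr 1
          simp [_root_.abs_of_nonneg hCnn]
  refine hnorm.trans ?_
  have hVnn : (0:ℝ) ≤ ‖V‖ := norm_nonneg _
  have hu2 : (0:ℝ) ≤ ‖u‖ := norm_nonneg _
  have htnn : (0:ℝ) ≤ |t| := abs_nonneg _
  rw [hC]
  nlinarith [sq_nonneg ‖V‖, pow_nonneg hu2 5, mul_nonneg (mul_nonneg htnn (sq_nonneg ‖V‖)) (pow_nonneg hu2 5)]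
end
end

section
/- Removal of the exponential weight in error estimates: let (Ω, ℱ, ℙ) be a probability space and e, S : Ω → [0,∞) be measurable random variables. Let r ∈ (0,∞), σ ∈ (0,∞), K ∈ [0,∞), μ̄ ∈ (0,∞), p ∈ (1,∞), and set μ := (1 − 1/p)μ̄. Let τ ∈ (0,1) and A, B, D ∈ (0,∞) be such that 𝔼[exp(μ̄ S)] ≤ A, 𝔼[e^{pr}] ≤ B, and 𝔼[exp(−prK S) e^{pr}] ≤ D τ^{prσ/2}. Then there exists a constant C ∈ (0,∞), depending only on r, σ, K, μ̄, p, A, B, D (and not on τ), such that 𝔼[e^r] ≤ C τ^{(rσ/2)·θ}, where θ = 1 if rK ≤ μ and θ = μ/(rK) if rK > μ. -/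
open MeasureTheory Real

/-- Removal of the exponential weight in error estimates: if `𝔼[exp(μ̄ S)] ≤ A`,
`𝔼[e^{pr}] ≤ B` and `𝔼[exp(−prK S) e^{pr}] ≤ D τ^{prσ/2}`, then with `μ = (1 − 1/p)μ̄` one has
`𝔼[e^r] ≤ C τ^{(rσ/2)θ}` where `θ = 1` if `rK ≤ μ` and `θ = μ/(rK)` otherwise, for a constant
`C` depending only on `r, σ, K, μ̄, p, A, B, D` and not on `τ`. -/
theorem stmt10 {Ω : Type*} [MeasurableSpace Ω] (P : Measure Ω) [IsProbabilityMeasure P]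
    (r σ K μbar p : ℝ) (hr : 0 < r) (hσ : 0 < σ) (hK : 0 ≤ K) (hμbar : 0 < μbar)
    (hp : 1 < p) (A B D : ℝ) (hA : 0 < A) (hB : 0 < B) (hD : 0 < D) :
    ∃ C : ℝ, 0 < C ∧
      ∀ τ : ℝ, τ ∈ Set.Ioo (0 : ℝ) 1 →
      ∀ e S : Ω → ℝ, Measurable e → Measurable S →
        (∀ ω, 0 ≤ e ω) → (∀ ω, 0 ≤ S ω) →
        (∫⁻ ω, ENNReal.ofReal (Real.exp (μbar * S ω)) ∂P) ≤ ENNReal.ofReal A →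
        (∫⁻ ω, ENNReal.ofReal (e ω ^ (p * r)) ∂P) ≤ ENNReal.ofReal B →
        (∫⁻ ω, ENNReal.ofReal (Real.exp (-(p * r * K) * S ω) * e ω ^ (p * r)) ∂P) ≤
          ENNReal.ofReal (D * τ ^ (p * r * σ / 2)) →
        (∫⁻ ω, ENNReal.ofReal (e ω ^ r) ∂P) ≤
          ENNReal.ofReal (C * τ ^ (r * σ / 2 *
            (if r * K ≤ (1 - 1 / p) * μbar then 1 else ((1 - 1 / p) * μbar) / (r * K)))) := by
  have hp0 : 0 < p := lt_trans one_pos hp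
  have hpq : p.HolderConjugate (Real.conjExponent p) := Real.HolderConjugate.conjExponent hp
  set q : ℝ := Real.conjExponent p with hqdef
  have hq0 : 0 < q := hpq.symm.pos
  have hq1 : q * (1 - 1 / p) = 1 := by
    have h := hpq.inv_add_inv_eq_one
    have h2 : 1 - 1 / p = q⁻¹ := by rw [one_div]; linarith
    rw [h2, mul_inv_cancel₀ (ne_of_gt hq0)]
  set μ : ℝ := (1 - 1 / p) * μbar with hμdef
  have h1p : 0 < 1 - 1 / p := by
    have : 1 / p < 1 := by
      rw [div_lt_one hp0]; exact hp
    linarith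
  have hμ0 : 0 < μ := mul_pos h1p hμbar
  have hqμ : q * μ = μbar := by
    rw [hμdef, ← mul_assoc, hq1, one_mul]
  set θ : ℝ := if r * K ≤ μ then 1 else μ / (r * K) with hθdef
  have hθ0 : 0 < θ := by
    rw [hθdef]
    split_ifs with h
    · exact one_pos
    · exact div_pos hμ0 (lt_trans hμ0 (not_le.mp h))
  have hθ1 : θ ≤ 1 := by
    rw [hθdef]
    split_ifs with h
    · exact le_rfl
    · exact le_of_lt ((div_lt_one (lt_trans hμ0 (not_le.mp h))).mpr (not_le.mp h))
  refine ⟨D ^ (θ / p) * B ^ ((1 - θ) / p) * A ^ (1 / q), by positivity, ?_⟩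
  intro τ hτ e S he hS he0 hS0 hAint hBint hDint
  obtain ⟨hτ0, hτ1⟩ := hτ
  set m : ℝ := θ * (r * K) with hmdef
  have hm0 : 0 ≤ m := by positivity
  have hmμ : m ≤ μ := by
    rw [hmdef, hθdef]
    split_ifs with h
    · simpa using h
    · have hrK : 0 < r * K := lt_trans hμ0 (not_le.mp h)
      rw [div_mul_cancel₀ _ (ne_of_gt hrK)]
  -- first Hölder with exponents p, q
  have hf1 : Measurable fun ω => ENNReal.ofReal (e ω ^ r * Real.exp (-m * S ω)) := by fun_prop
  have hg1 : Measurable fun ω => ENNReal.ofReal (Real.exp (m * S ω)) := by fun_prop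
  have key1 := ENNReal.lintegral_mul_le_Lp_mul_Lq P hpq hf1.aemeasurable hg1.aemeasurable
  have lhs_eq : (∫⁻ ω, ((fun ω => ENNReal.ofReal (e ω ^ r * Real.exp (-m * S ω))) *
      fun ω => ENNReal.ofReal (Real.exp (m * S ω))) ω ∂P)
      = ∫⁻ ω, ENNReal.ofReal (e ω ^ r) ∂P := by
    refine lintegral_congr fun ω => ?_
    simp only [Pi.mul_apply]
    rw [← ENNReal.ofReal_mul (mul_nonneg (Real.rpow_nonneg (he0 ω) _) (Real.exp_pos _).le)]
    congr 1
    rw [mul_assoc, ← Real.exp_add]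
    have h0 : -m * S ω + m * S ω = 0 := by ring
    rw [h0, Real.exp_zero, mul_one]
  have fpow_eq : ∀ ω, (ENNReal.ofReal (e ω ^ r * Real.exp (-m * S ω))) ^ p
      = ENNReal.ofReal (e ω ^ (p * r) * Real.exp (-(p * m) * S ω)) := by
    intro ω
    rw [ENNReal.ofReal_rpow_of_nonneg
      (mul_nonneg (Real.rpow_nonneg (he0 ω) _) (Real.exp_pos _).le) hp0.le]
    congr 1
    rw [Real.mul_rpow (Real.rpow_nonneg (he0 ω) r) (Real.exp_pos _).le,
      ← Real.rpow_mul (he0 ω), ← Real.exp_mul]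
    congr 1
    · congr 1; ring
    · congr 1; ring
  have gpow_eq : ∀ ω, (ENNReal.ofReal (Real.exp (m * S ω))) ^ q
      = ENNReal.ofReal (Real.exp (q * m * S ω)) := by
    intro ω
    rw [ENNReal.ofReal_rpow_of_nonneg (Real.exp_pos _).le hq0.le, ← Real.exp_mul]
    congr 2
    ring
  rw [lhs_eq] at key1
  simp only [fpow_eq, gpow_eq] at key1
  -- bound the second factor by A
  have hAbound : (∫⁻ ω, ENNReal.ofReal (Real.exp (q * m * S ω)) ∂P) ≤ ENNReal.ofReal A := by
    refine le_trans (lintegral_mono fun ω => ?_) hAint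
    apply ENNReal.ofReal_le_ofReal
    apply Real.exp_le_exp.mpr
    have hqm : q * m ≤ μbar := by
      rw [← hqμ]
      exact mul_le_mul_of_nonneg_left hmμ hq0.le
    exact mul_le_mul_of_nonneg_right hqm (hS0 ω)
  -- bound the first factor
  have hfirst : (∫⁻ ω, ENNReal.ofReal (e ω ^ (p * r) * Real.exp (-(p * m) * S ω)) ∂P)
      ≤ (ENNReal.ofReal (D * τ ^ (p * r * σ / 2))) ^ θ * (ENNReal.ofReal B) ^ (1 - θ) := by
    rcases eq_or_lt_of_le hθ1 with hθeq | hθlt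
    · -- θ = 1
      rw [hθeq, ENNReal.rpow_one, sub_self, ENNReal.rpow_zero, mul_one]
      refine le_trans (le_of_eq ?_) hDint
      refine lintegral_congr fun ω => ?_
      rw [mul_comm]
      congr 3
      rw [hmdef, hθeq]
      ring
    · -- θ < 1 : second Hölder with exponents 1/θ, 1/(1-θ)
      have h1θ : 0 < 1 - θ := by linarith
      have hconj : (1/θ).HolderConjugate (1/(1-θ)) :=
        Real.holderConjugate_one_div hθ0 h1θ (by ring)
      have hf2 : Measurable fun ω =>
          ENNReal.ofReal ((Real.exp (-(p * r * K) * S ω) * e ω ^ (p * r)) ^ θ) := by fun_prop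
      have hg2 : Measurable fun ω => ENNReal.ofReal ((e ω ^ (p * r)) ^ (1 - θ)) := by fun_prop
      have key2 := ENNReal.lintegral_mul_le_Lp_mul_Lq P hconj hf2.aemeasurable hg2.aemeasurable
      have lhs2 : (∫⁻ ω, ((fun ω =>
          ENNReal.ofReal ((Real.exp (-(p * r * K) * S ω) * e ω ^ (p * r)) ^ θ)) *
          fun ω => ENNReal.ofReal ((e ω ^ (p * r)) ^ (1 - θ))) ω ∂P)
          = ∫⁻ ω, ENNReal.ofReal (e ω ^ (p * r) * Real.exp (-(p * m) * S ω)) ∂P := by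
        refine lintegral_congr fun ω => ?_
        simp only [Pi.mul_apply]
        rw [← ENNReal.ofReal_mul (Real.rpow_nonneg
          (mul_nonneg (Real.exp_pos _).le (Real.rpow_nonneg (he0 ω) _)) _)]
        congr 1
        rw [Real.mul_rpow (Real.exp_pos _).le (Real.rpow_nonneg (he0 ω) _),
          ← Real.exp_mul, ← Real.rpow_mul (he0 ω), ← Real.rpow_mul (he0 ω),
          mul_assoc, ← Real.rpow_add' (he0 ω)
            (by rw [show p * r * θ + p * r * (1 - θ) = p * r by ring]; exact ne_of_gt (mul_pos hp0 hr))]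
        rw [show p * r * θ + p * r * (1 - θ) = p * r by ring,
          show -(p * r * K) * S ω * θ = -(p * m) * S ω by rw [hmdef]; ring]
        ring
      have fpow2 : ∀ ω, (ENNReal.ofReal ((Real.exp (-(p * r * K) * S ω) * e ω ^ (p * r)) ^ θ))
          ^ (1/θ) = ENNReal.ofReal (Real.exp (-(p * r * K) * S ω) * e ω ^ (p * r)) := by
        intro ω
        have hbase : 0 ≤ Real.exp (-(p * r * K) * S ω) * e ω ^ (p * r) :=
          mul_nonneg (Real.exp_pos _).le (Real.rpow_nonneg (he0 ω) _)
        rw [ENNReal.ofReal_rpow_of_nonneg (Real.rpow_nonneg hbase _) (by positivity),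
          ← Real.rpow_mul hbase, show θ * (1 / θ) = 1 by field_simp, Real.rpow_one]
      have gpow2 : ∀ ω, (ENNReal.ofReal ((e ω ^ (p * r)) ^ (1 - θ))) ^ (1/(1-θ))
          = ENNReal.ofReal (e ω ^ (p * r)) := by
        intro ω
        rw [ENNReal.ofReal_rpow_of_nonneg (Real.rpow_nonneg (Real.rpow_nonneg (he0 ω) _) _)
            (by positivity),
          ← Real.rpow_mul (he0 ω), ← Real.rpow_mul (he0 ω),
          show p * r * (1 - θ) * (1 / (1 - θ)) = p * r by field_simp]
      rw [lhs2] at key2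
      simp only [fpow2, gpow2, one_div_one_div] at key2
      refine key2.trans (mul_le_mul' ?_ ?_)
      · exact ENNReal.rpow_le_rpow hDint hθ0.le
      · exact ENNReal.rpow_le_rpow hBint h1θ.le
  -- assemble
  have final : (∫⁻ ω, ENNReal.ofReal (e ω ^ r) ∂P)
      ≤ ((ENNReal.ofReal (D * τ ^ (p * r * σ / 2))) ^ θ * (ENNReal.ofReal B) ^ (1 - θ)) ^ (1/p)
        * (ENNReal.ofReal A) ^ (1/q) := by
    refine key1.trans (mul_le_mul' ?_ ?_)
    · exact ENNReal.rpow_le_rpow hfirst (by positivity)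
    · exact ENNReal.rpow_le_rpow hAbound (by positivity)
  have conv : ((ENNReal.ofReal (D * τ ^ (p * r * σ / 2))) ^ θ * (ENNReal.ofReal B) ^ (1 - θ))
        ^ (1/p) * (ENNReal.ofReal A) ^ (1/q)
      = ENNReal.ofReal (((D * τ ^ (p * r * σ / 2)) ^ θ * B ^ (1 - θ)) ^ (1/p) * A ^ (1/q)) := by
    have hDτ : 0 ≤ D * τ ^ (p * r * σ / 2) :=
      mul_nonneg hD.le (Real.rpow_nonneg hτ0.le _)
    rw [ENNReal.ofReal_rpow_of_nonneg hDτ hθ0.le,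
      ENNReal.ofReal_rpow_of_nonneg hB.le (by linarith),
      ← ENNReal.ofReal_mul (Real.rpow_nonneg hDτ _),
      ENNReal.ofReal_rpow_of_nonneg
        (mul_nonneg (Real.rpow_nonneg hDτ _) (Real.rpow_nonneg hB.le _)) (by positivity),
      ENNReal.ofReal_rpow_of_nonneg hA.le (by positivity),
      ← ENNReal.ofReal_mul (Real.rpow_nonneg
        (mul_nonneg (Real.rpow_nonneg hDτ _) (Real.rpow_nonneg hB.le _)) _)]
  have realeq : ((D * τ ^ (p * r * σ / 2)) ^ θ * B ^ (1 - θ)) ^ (1/p) * A ^ (1/q)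
      = (D ^ (θ / p) * B ^ ((1 - θ) / p) * A ^ (1 / q)) * τ ^ (r * σ / 2 * θ) := by
    rw [Real.mul_rpow hD.le (Real.rpow_nonneg hτ0.le _), ← Real.rpow_mul hτ0.le,
      Real.mul_rpow (mul_nonneg (Real.rpow_nonneg hD.le _) (Real.rpow_nonneg hτ0.le _))
        (Real.rpow_nonneg hB.le _),
      Real.mul_rpow (Real.rpow_nonneg hD.le _) (Real.rpow_nonneg hτ0.le _),
      ← Real.rpow_mul hD.le, ← Real.rpow_mul hτ0.le, ← Real.rpow_mul hB.le]
    rw [show θ * (1/p) = θ / p by ring, show (1 - θ) * (1/p) = (1 - θ) / p by ring,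
      show p * r * σ / 2 * θ * (1/p) = r * σ / 2 * θ by field_simp]
    ring
  rw [conv, realeq] at final
  exact final
end

section
/- For every continuous V : 𝕋^d → ℝ, the map F : L² → L², F(u) = (V⋆|u|²)·u, viewed as a map between L² considered as a real Banach space, is Fréchet differentiable at every u ∈ L², with derivative given by F′(u).h = (V⋆|u|²)·h + 2 (V⋆Re(ū h))·u for all h ∈ L², where Re(ū h) denotes the pointwise real part of the product of the conjugate of u with h. -/
set_option maxHeartbeats 1000000


open MeasureTheory Complex Real

noncomputable section

/-- The convolution `V ⋆ Re(conj g · h)` for `g, h ∈ L²`. -/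
def Vconv2 {d : ℕ} (V : C(Torus d, ℝ)) (g h : L2T d) : Torus d → ℝ :=
  fun x => ∫ y, V (x - y) * ((starRingEnd ℂ) ((g : Torus d → ℂ) y) * (h : Torus d → ℂ) y).re

/-- The candidate derivative `F′(u).h = (V⋆|u|²)·h + 2 (V⋆Re(ū h))·u` as a function. -/
def DFun {d : ℕ} (V : C(Torus d, ℝ)) (u h : L2T d) : Torus d → ℂ :=
  fun x => (Vconv V u x : ℂ) * (h : Torus d → ℂ) x
    + 2 * (Vconv2 V u h x : ℂ) * (u : Torus d → ℂ) x

open Classical in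
/-- `F′(u).h` as an element of `L²`. -/
def DL {d : ℕ} (V : C(Torus d, ℝ)) (u h : L2T d) : L2T d :=
  if hm : MemLp (DFun V u h) 2 volume then hm.toLp _ else 0

section Aux

open Convolution

variable {d : ℕ}

private lemma re_conj_self (z : ℂ) : ((starRingEnd ℂ) z * z).re = ‖z‖ ^ 2 := by
  rw [← Complex.normSq_eq_conj_mul_self, Complex.ofReal_re, 
    Complex.sq_norm]

private lemma re_conj_expand (a b : ℂ) :
    ((starRingEnd ℂ) (a + b) * (a + b)).re
      = ((starRingEnd ℂ) a * a).re + 2 * ((starRingEnd ℂ) a * b).re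
        + ((starRingEnd ℂ) b * b).re := by
  simp only [map_add, add_mul, mul_add, Complex.add_re, Complex.mul_re, Complex.conj_re,
    Complex.conj_im]
  ring

private lemma abs_re_conj_mul (a b : ℂ) : |((starRingEnd ℂ) a * b).re| ≤ ‖a‖ * ‖b‖ := by
  calc |((starRingEnd ℂ) a * b).re| ≤ ‖(starRingEnd ℂ) a * b‖ := Complex.abs_re_le_norm _
    _ = ‖a‖ * ‖b‖ := by rw [norm_mul, RCLike.norm_conj]

/-- The function `y ↦ Re(conj (g y) * h y)` is integrable. -/
private lemma integrable_reK (g h : L2T d) :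
    Integrable (fun y => ((starRingEnd ℂ) ((g : Torus d → ℂ) y) * (h : Torus d → ℂ) y).re)
      volume := by
  have := (MeasureTheory.L2.integrable_inner (𝕜 := ℂ) g h).re
  simpa [RCLike.inner_apply, mul_comm] using this

private lemma integrable_normMul (g h : L2T d) :
    Integrable (fun y => ‖(g : Torus d → ℂ) y‖ * ‖(h : Torus d → ℂ) y‖) volume := by
  have hG := (Lp.memLp g).norm
  have hH := (Lp.memLp h).norm
  have := MeasureTheory.L2.integrable_inner (𝕜 := ℝ) (hG.toLp _) (hH.toLp _)
  simp only [RCLike.inner_apply, starRingEnd_apply, star_trivial] at this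
  refine this.congr ?_
  filter_upwards [hG.coeFn_toLp, hH.coeFn_toLp] with y h1 h2
  rw [h1, h2, mul_comm]

private lemma integral_normMul_le (g h : L2T d) :
    ∫ y, ‖(g : Torus d → ℂ) y‖ * ‖(h : Torus d → ℂ) y‖ ≤ ‖g‖ * ‖h‖ := by
  have hG := (Lp.memLp g).norm
  have hH := (Lp.memLp h).norm
  have hnG : ‖hG.toLp _‖ = ‖g‖ := by
    rw [Lp.norm_toLp, eLpNorm_norm, Lp.norm_def]
  have hnH : ‖hH.toLp _‖ = ‖h‖ := by
    rw [Lp.norm_toLp, eLpNorm_norm, Lp.norm_def]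
  have h1 : ∫ y, ‖(g : Torus d → ℂ) y‖ * ‖(h : Torus d → ℂ) y‖
      = (inner ℝ (hG.toLp _) (hH.toLp _) : ℝ) := by
    rw [MeasureTheory.L2.inner_def]
    refine integral_congr_ae ?_
    filter_upwards [hG.coeFn_toLp, hH.coeFn_toLp] with y h1 h2
    simp only [RCLike.inner_apply, starRingEnd_apply, star_trivial]
    rw [h1, h2, mul_comm]
  rw [h1, ← hnG, ← hnH]
  exact real_inner_le_norm _ _

/-- Integrability of the convolution integrand. -/
private lemma integrable_VK (V : C(Torus d, ℝ)) (g h : L2T d) (x : Torus d) :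
    Integrable (fun y => V (x - y)
      * ((starRingEnd ℂ) ((g : Torus d → ℂ) y) * (h : Torus d → ℂ) y).re) volume := by
  refine (integrable_reK g h).bdd_mul (c := ‖V‖)
    ((V.continuous.comp (continuous_const.sub continuous_id)).aestronglyMeasurable) ?_
  exact ae_of_all _ fun y => V.norm_coe_le_norm _

/-- `Vconv` is a special case of `Vconv2`. -/
private lemma Vconv_eq (V : C(Torus d, ℝ)) (g : L2T d) : Vconv V g = Vconv2 V g g := by
  funext x
  refine integral_congr_ae (ae_of_all _ fun y => ?_)
  simp only [re_conj_self]

private lemma Vconv2_bound (V : C(Torus d, ℝ)) (g h : L2T d) (x : Torus d) :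
    |Vconv2 V g h x| ≤ ‖V‖ * (‖g‖ * ‖h‖) := by
  have hb : ∀ y, ‖V (x - y)
      * ((starRingEnd ℂ) ((g : Torus d → ℂ) y) * (h : Torus d → ℂ) y).re‖
      ≤ ‖V‖ * (‖(g : Torus d → ℂ) y‖ * ‖(h : Torus d → ℂ) y‖) := by
    intro y
    rw [norm_mul]
    exact mul_le_mul (V.norm_coe_le_norm _) (abs_re_conj_mul _ _) (abs_nonneg _) (norm_nonneg V)
  calc |Vconv2 V g h x| ≤ ∫ y, ‖V‖ * (‖(g : Torus d → ℂ) y‖ * ‖(h : Torus d → ℂ) y‖) :=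
        norm_integral_le_of_norm_le ((integrable_normMul g h).const_mul _) (ae_of_all _ hb)
    _ = ‖V‖ * ∫ y, ‖(g : Torus d → ℂ) y‖ * ‖(h : Torus d → ℂ) y‖ := integral_const_mul _ _
    _ ≤ ‖V‖ * (‖g‖ * ‖h‖) := by
        exact mul_le_mul_of_nonneg_left (integral_normMul_le g h) (norm_nonneg V)

private lemma Vconv2_continuous (V : C(Torus d, ℝ)) (g h : L2T d) :
    Continuous (Vconv2 V g h) := by
  have : Vconv2 V g h
      = (fun y => ((starRingEnd ℂ) ((g : Torus d → ℂ) y) * (h : Torus d → ℂ) y).re)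
          ⋆[ContinuousLinearMap.mul ℝ ℝ, volume] (V : Torus d → ℝ) := by
    funext x
    simp only [convolution, ContinuousLinearMap.mul_apply']
    exact integral_congr_ae (ae_of_all _ fun y => (mul_comm _ _))
  rw [this]
  exact BddAbove.continuous_convolution_right_of_integrable (ContinuousLinearMap.mul ℝ ℝ)
    ((isCompact_range V.continuous.norm).bddAbove.mono (by rintro x ⟨y, rfl⟩; exact ⟨y, rfl⟩))
    (integrable_reK g h) V.continuous

/-- Membership in `L²` for a bounded continuous real multiplier times an `L²` function. -/
private lemma memLp_mulc {c : Torus d → ℝ} (hc : Continuous c) {B : ℝ} (hB : ∀ x, |c x| ≤ B)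
    (f : L2T d) : MemLp (fun x => (c x : ℂ) * (f : Torus d → ℂ) x) 2 volume := by
  refine MemLp.of_le_mul (c := B) (Lp.memLp f)
    (((Complex.continuous_ofReal.comp hc).aestronglyMeasurable).mul (Lp.aestronglyMeasurable f))
    (ae_of_all _ fun x => ?_)
  rw [norm_mul, Complex.norm_real]
  exact mul_le_mul_of_nonneg_right (hB x) (norm_nonneg _)

private lemma norm_toLp_mulc {c : Torus d → ℝ} {B : ℝ} (hB : ∀ x, |c x| ≤ B)
    {f : L2T d} (hm : MemLp (fun x => (c x : ℂ) * (f : Torus d → ℂ) x) 2 volume) :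
    ‖hm.toLp _‖ ≤ B * ‖f‖ := by
  have hB0 : 0 ≤ B := le_trans (abs_nonneg _) (hB 0)
  rw [Lp.norm_toLp]
  have hle : eLpNorm (fun x => (c x : ℂ) * (f : Torus d → ℂ) x) 2 volume
      ≤ ENNReal.ofReal B * eLpNorm (f : Torus d → ℂ) 2 volume := by
    refine eLpNorm_le_mul_eLpNorm_of_ae_le_mul (ae_of_all _ fun x => ?_) 2
    rw [norm_mul, Complex.norm_real]
    exact mul_le_mul_of_nonneg_right (hB x) (norm_nonneg _)
  refine le_trans (ENNReal.toReal_mono ?_ hle) ?_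
  · exact ENNReal.mul_ne_top ENNReal.ofReal_ne_top (Lp.eLpNorm_ne_top f)
  · rw [ENNReal.toReal_mul, ENNReal.toReal_ofReal hB0, ← Lp.norm_def]

end Aux

section Main

variable {d : ℕ}

private lemma Vconv2_add_right (V : C(Torus d, ℝ)) (g h₁ h₂ : L2T d) (x : Torus d) :
    Vconv2 V g (h₁ + h₂) x = Vconv2 V g h₁ x + Vconv2 V g h₂ x := by
  have hae : (fun y => V (x - y) * ((starRingEnd ℂ) ((g : Torus d → ℂ) y)
        * ((h₁ + h₂ : L2T d) : Torus d → ℂ) y).re)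
      =ᵐ[volume] fun y => V (x - y) * ((starRingEnd ℂ) ((g : Torus d → ℂ) y)
        * (h₁ : Torus d → ℂ) y).re
        + V (x - y) * ((starRingEnd ℂ) ((g : Torus d → ℂ) y) * (h₂ : Torus d → ℂ) y).re := by
    filter_upwards [Lp.coeFn_add h₁ h₂] with y hy
    rw [hy]
    simp only [Pi.add_apply, mul_add, Complex.add_re]
  unfold Vconv2
  rw [integral_congr_ae hae, integral_add (integrable_VK V g h₁ x) (integrable_VK V g h₂ x)]

private lemma Vconv2_smul_right (V : C(Torus d, ℝ)) (g h : L2T d) (r : ℝ) (x : Torus d) :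
    Vconv2 V g (r • h) x = r * Vconv2 V g h x := by
  unfold Vconv2
  rw [← integral_const_mul]
  refine integral_congr_ae ?_
  filter_upwards [Lp.coeFn_smul r h] with y hy
  rw [hy]
  simp only [Pi.smul_apply, Complex.real_smul, Complex.mul_re, Complex.ofReal_re,
    Complex.ofReal_im, Complex.mul_im]
  ring

private lemma Vconv_expand (V : C(Torus d, ℝ)) (u h : L2T d) (x : Torus d) :
    Vconv V (u + h) x = Vconv V u x + 2 * Vconv2 V u h x + Vconv V h x := by
  rw [Vconv_eq V (u + h), Vconv_eq V u, Vconv_eq V h]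
  have hae : (fun y => V (x - y) * ((starRingEnd ℂ) (((u + h : L2T d) : Torus d → ℂ) y)
        * ((u + h : L2T d) : Torus d → ℂ) y).re)
      =ᵐ[volume] fun y =>
        V (x - y) * ((starRingEnd ℂ) ((u : Torus d → ℂ) y) * (u : Torus d → ℂ) y).re
        + (2 * (V (x - y) * ((starRingEnd ℂ) ((u : Torus d → ℂ) y) * (h : Torus d → ℂ) y).re)
          + V (x - y) * ((starRingEnd ℂ) ((h : Torus d → ℂ) y) * (h : Torus d → ℂ) y).re) := by
    filter_upwards [Lp.coeFn_add u h] with y hy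
    rw [hy]
    simp only [Pi.add_apply]
    rw [re_conj_expand]
    ring
  have hA := integrable_VK V u u x
  have hB : Integrable (fun y => 2 * (V (x - y) * ((starRingEnd ℂ) ((u : Torus d → ℂ) y)
      * (h : Torus d → ℂ) y).re)) volume := (integrable_VK V u h x).const_mul 2
  have hC := integrable_VK V h h x
  have hBC : Integrable (fun y => 2 * (V (x - y) * ((starRingEnd ℂ) ((u : Torus d → ℂ) y)
      * (h : Torus d → ℂ) y).re) + V (x - y) * ((starRingEnd ℂ) ((h : Torus d → ℂ) y)
      * (h : Torus d → ℂ) y).re) volume := hB.add hC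
  unfold Vconv2
  rw [integral_congr_ae hae, integral_add hA hBC, integral_add hB hC, integral_const_mul]
  ring

private lemma Vconv_cont (V : C(Torus d, ℝ)) (u : L2T d) : Continuous (Vconv V u) := by
  rw [Vconv_eq]; exact Vconv2_continuous V u u

private lemma Vconv_bound (V : C(Torus d, ℝ)) (u : L2T d) (x : Torus d) :
    |Vconv V u x| ≤ ‖V‖ * (‖u‖ * ‖u‖) := by
  rw [Vconv_eq]; exact Vconv2_bound V u u x

private lemma memLp_FFun (V : C(Torus d, ℝ)) (v : L2T d) : MemLp (FFun V v) 2 volume :=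
  memLp_mulc (Vconv_cont V v) (Vconv_bound V v) v

private lemma bound_D2 (V : C(Torus d, ℝ)) (u h : L2T d) (x : Torus d) :
    |2 * Vconv2 V u h x| ≤ 2 * (‖V‖ * (‖u‖ * ‖h‖)) := by
  rw [abs_mul, show |(2 : ℝ)| = 2 by norm_num]
  exact mul_le_mul_of_nonneg_left (Vconv2_bound V u h x) two_pos.le

private lemma memLp_D1 (V : C(Torus d, ℝ)) (u h : L2T d) :
    MemLp (fun x => ((Vconv V u x : ℝ) : ℂ) * (h : Torus d → ℂ) x) 2 volume :=
  memLp_mulc (Vconv_cont V u) (Vconv_bound V u) h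

private lemma memLp_D2 (V : C(Torus d, ℝ)) (u h : L2T d) :
    MemLp (fun x => ((2 * Vconv2 V u h x : ℝ) : ℂ) * (u : Torus d → ℂ) x) 2 volume :=
  memLp_mulc (continuous_const.mul (Vconv2_continuous V u h)) (bound_D2 V u h) u

private lemma DFun_eq (V : C(Torus d, ℝ)) (u h : L2T d) :
    DFun V u h = (fun x => ((Vconv V u x : ℝ) : ℂ) * (h : Torus d → ℂ) x)
      + fun x => ((2 * Vconv2 V u h x : ℝ) : ℂ) * (u : Torus d → ℂ) x := by
  funext x
  simp only [DFun, Pi.add_apply]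
  push_cast
  ring

private lemma memLp_DFun (V : C(Torus d, ℝ)) (u h : L2T d) : MemLp (DFun V u h) 2 volume := by
  rw [DFun_eq]
  exact (memLp_D1 V u h).add (memLp_D2 V u h)

private lemma DL_eq (V : C(Torus d, ℝ)) (u h : L2T d) :
    DL V u h = (memLp_D1 V u h).toLp _ + (memLp_D2 V u h).toLp _ := by
  rw [DL, dif_pos (memLp_DFun V u h), ← MemLp.toLp_add]
  exact MemLp.toLp_congr _ _ (by rw [DFun_eq])

private lemma DL_norm_le (V : C(Torus d, ℝ)) (u h : L2T d) :
    ‖DL V u h‖ ≤ 3 * ‖V‖ * (‖u‖ * ‖u‖) * ‖h‖ := by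
  rw [DL_eq]
  refine le_trans (norm_add_le _ _) (le_trans (add_le_add
    (norm_toLp_mulc (Vconv_bound V u) (memLp_D1 V u h))
    (norm_toLp_mulc (bound_D2 V u h) (memLp_D2 V u h))) (le_of_eq (by ring)))

private lemma DL_add (V : C(Torus d, ℝ)) (u h₁ h₂ : L2T d) :
    DL V u (h₁ + h₂) = DL V u h₁ + DL V u h₂ := by
  rw [DL, dif_pos (memLp_DFun V u (h₁ + h₂)), DL, dif_pos (memLp_DFun V u h₁), DL,
    dif_pos (memLp_DFun V u h₂), ← MemLp.toLp_add]
  refine MemLp.toLp_congr _ _ ?_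
  filter_upwards [Lp.coeFn_add h₁ h₂] with x hx
  simp only [DFun, Pi.add_apply, hx, Vconv2_add_right]
  push_cast
  ring

private lemma DL_smul (V : C(Torus d, ℝ)) (u : L2T d) (r : ℝ) (h : L2T d) :
    DL V u (r • h) = r • DL V u h := by
  rw [DL, dif_pos (memLp_DFun V u (r • h)), DL, dif_pos (memLp_DFun V u h),
    ← MemLp.toLp_const_smul]
  refine MemLp.toLp_congr _ _ ?_
  filter_upwards [Lp.coeFn_smul r h] with x hx
  simp only [DFun, Pi.smul_apply, hx, Vconv2_smul_right, Complex.real_smul]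
  push_cast
  ring

private lemma memLp_R1 (V : C(Torus d, ℝ)) (u h : L2T d) :
    MemLp (fun x => ((2 * Vconv2 V u h x : ℝ) : ℂ) * (h : Torus d → ℂ) x) 2 volume :=
  memLp_mulc (continuous_const.mul (Vconv2_continuous V u h)) (bound_D2 V u h) h

private lemma memLp_R2 (V : C(Torus d, ℝ)) (u h : L2T d) :
    MemLp (fun x => ((Vconv2 V h h x : ℝ) : ℂ) * (u : Torus d → ℂ) x) 2 volume :=
  memLp_mulc (Vconv2_continuous V h h) (Vconv2_bound V h h) u

private lemma memLp_R3 (V : C(Torus d, ℝ)) (h : L2T d) :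
    MemLp (fun x => ((Vconv2 V h h x : ℝ) : ℂ) * (h : Torus d → ℂ) x) 2 volume :=
  memLp_mulc (Vconv2_continuous V h h) (Vconv2_bound V h h) h

private lemma FL_eq (V : C(Torus d, ℝ)) (v : L2T d) : FL V v = (memLp_FFun V v).toLp _ := by
  rw [FL, dif_pos (memLp_FFun V v)]

private lemma DL_eq' (V : C(Torus d, ℝ)) (u h : L2T d) :
    DL V u h = (memLp_DFun V u h).toLp _ := by
  rw [DL, dif_pos (memLp_DFun V u h)]

private lemma key_expand (V : C(Torus d, ℝ)) (u h : L2T d) :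
    FL V (u + h) - FL V u - DL V u h
      = (memLp_R1 V u h).toLp _ + (memLp_R2 V u h).toLp _ + (memLp_R3 V h).toLp _ := by
  have e : FL V (u + h)
      = (((memLp_FFun V u).add (memLp_DFun V u h)).add
          (((memLp_R1 V u h).add (memLp_R2 V u h)).add (memLp_R3 V h))).toLp _ := by
    rw [FL, dif_pos (memLp_FFun V (u + h))]
    refine MemLp.toLp_congr _ _ ?_
    filter_upwards [Lp.coeFn_add u h] with x hx
    have hx' : ((u + h : L2T d) : Torus d → ℂ) x = (u : Torus d → ℂ) x + (h : Torus d → ℂ) x := by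
      rw [hx]; rfl
    simp only [FFun, DFun, Pi.add_apply]
    rw [Vconv_expand V u h x, hx', Vconv_eq V h]
    push_cast
    ring
  have habc : ∀ a b c : L2T d, a + b + c - a - b = c := fun a b c => by abel
  rw [e, MemLp.toLp_add ((memLp_FFun V u).add (memLp_DFun V u h))
      (((memLp_R1 V u h).add (memLp_R2 V u h)).add (memLp_R3 V h)),
    MemLp.toLp_add (memLp_FFun V u) (memLp_DFun V u h),
    MemLp.toLp_add ((memLp_R1 V u h).add (memLp_R2 V u h)) (memLp_R3 V h),
    MemLp.toLp_add (memLp_R1 V u h) (memLp_R2 V u h),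
    FL_eq V u, DL_eq' V u h]
  exact habc _ _ _

private lemma remainder_bound (V : C(Torus d, ℝ)) (u h : L2T d) :
    ‖FL V (u + h) - FL V u - DL V u h‖ ≤ ‖V‖ * (3 * ‖u‖ + ‖h‖) * (‖h‖ * ‖h‖) := by
  rw [key_expand V u h]
  refine le_trans (norm_add₃_le) (le_trans (add_le_add (add_le_add
    (norm_toLp_mulc (bound_D2 V u h) (memLp_R1 V u h))
    (norm_toLp_mulc (Vconv2_bound V h h) (memLp_R2 V u h)))
    (norm_toLp_mulc (Vconv2_bound V h h) (memLp_R3 V h))) (le_of_eq (by ring)))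

end Main

/-- The map `F : L² → L²`, `F(u) = (V⋆|u|²)·u`, viewed over `ℝ`, is Fréchet differentiable at
every `u ∈ L²`, with derivative `h ↦ (V⋆|u|²)·h + 2 (V⋆Re(ū h))·u`. -/
theorem stmt13 (d : ℕ) (hd : 1 ≤ d) (V : C(Torus d, ℝ)) (u : L2T d) :
    ∃ f' : L2T d →L[ℝ] L2T d, (∀ h : L2T d, f' h = DL V u h) ∧
      HasFDerivAt (fun v : L2T d => FL V v) f' u := by
  refine ⟨LinearMap.mkContinuous
    ⟨⟨fun h => DL V u h, DL_add V u⟩, fun r h => DL_smul V u r h⟩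
    (3 * ‖V‖ * (‖u‖ * ‖u‖)) (fun h => DL_norm_le V u h), fun h => rfl, ?_⟩
  rw [hasFDerivAt_iff_isLittleO_nhds_zero]
  refine Asymptotics.IsBigO.trans_isLittleO (g := fun h : L2T d => ‖h‖ * ‖h‖) ?_ ?_
  · rw [Asymptotics.isBigO_iff]
    refine ⟨‖V‖ * (3 * ‖u‖ + 1), ?_⟩
    filter_upwards [Metric.ball_mem_nhds (0 : L2T d) one_pos] with h hh
    rw [Metric.mem_ball, dist_zero_right] at hh
    simp only [LinearMap.mkContinuous_apply, LinearMap.coe_mk, AddHom.coe_mk]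
    rw [Real.norm_of_nonneg (mul_nonneg (norm_nonneg _) (norm_nonneg _))]
    refine le_trans (remainder_bound V u h) ?_
    refine mul_le_mul_of_nonneg_right (mul_le_mul_of_nonneg_left (by linarith) (norm_nonneg V))
      (mul_nonneg (norm_nonneg _) (norm_nonneg _))
  · rw [Asymptotics.isLittleO_iff]
    intro c hc
    filter_upwards [Metric.ball_mem_nhds (0 : L2T d) hc] with h hh
    rw [Metric.mem_ball, dist_zero_right] at hh
    rw [Real.norm_of_nonneg (mul_nonneg (norm_nonneg _) (norm_nonneg _))]
    exact mul_le_mul_of_nonneg_right hh.le (norm_nonneg _)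
end
end
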